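/- If R is a semiprime commutative Goldie ring, then its classical quotient ring Q_cl(R) is an Artinian von Neumann regular ring with finitely many minimal prime ideals. -/

import Mathlib

/-- A commutative ring is *zip* if every ideal with zero annihilator contains a
finitely generated subideal with zero annihilator. -/
def IsZipRing (R : Type*) [CommRing R] : Prop :=
  ∀ I : Ideal R, Submodule.annihilator I = ⊥ →
    ∃ I₀ : Ideal R, I₀ ≤ I ∧ I₀.FG ∧ Submodule.annihilator I₀ = ⊥

/-- Finite Goldie (uniform) dimension: no infinite independent family of nonzero ideals. -/
def HasFiniteGoldieDim (R : Type*) [CommRing R] : Prop :=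
  ¬ ∃ f : ℕ → Ideal R, (∀ n, f n ≠ ⊥) ∧ iSupIndep f

/-- Ascending chain condition on annihilator ideals. -/
def AccOnAnnihilators (R : Type*) [CommRing R] : Prop :=
  ∀ f : ℕ → Ideal R, Monotone f →
    (∀ n, ∃ J : Ideal R, f n = Submodule.annihilator J) →
    ∃ n, ∀ m, n ≤ m → f m = f n

/-- A Goldie ring: finite Goldie dimension and ACC on annihilator ideals. -/
def IsGoldieRing (R : Type*) [CommRing R] : Prop :=
  HasFiniteGoldieDim R ∧ AccOnAnnihilators R

open Ideal
section Aux
variable {R : Type*} [CommRing R]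

/-- annihilator of the principal ideal generated by `x`. -/
noncomputable def AnnI (x : R) : Ideal R := Submodule.annihilator (Ideal.span {x})

lemma mem_AnnI {a x : R} : a ∈ AnnI x ↔ a * x = 0 := by
  rw [AnnI]
  exact (Submodule.mem_annihilator_span_singleton x a).trans (by rw [smul_eq_mul])

/-- The set of maximal annihilator ideals. -/
def MaxAnn (R : Type*) [CommRing R] : Set (Ideal R) :=
  {P | ∃ y : R, y ≠ 0 ∧ P = AnnI y ∧ ∀ z : R, z ≠ 0 → P ≤ AnnI z → AnnI z = P}

variable (hred : IsReduced R) (hG : IsGoldieRing R)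

lemma exists_maxAnn (hacc : AccOnAnnihilators R) {x : R} (hx : x ≠ 0) :
    ∃ P ∈ MaxAnn R, AnnI x ≤ P := by
  by_contra hcon
  push_neg at hcon
  -- every y ≠ 0 with AnnI x ≤ AnnI y admits strictly bigger annihilator
  have step : ∀ y : R, y ≠ 0 → AnnI x ≤ AnnI y → ∃ z : R, z ≠ 0 ∧ AnnI y < AnnI z := by
    intro y hy hle
    by_contra hstep
    push_neg at hstep
    refine absurd (hcon (AnnI y) ⟨y, hy, rfl, ?_⟩) (by exact fun h => h hle)
    intro z hz hle'
    exact le_antisymm (by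
      rcases lt_or_eq_of_le hle' with h | h
      · exact absurd h (hstep z hz)
      · exact h.ge) hle'
  -- build a strictly increasing chain
  have : ∃ g : ℕ → {y : R // y ≠ 0 ∧ AnnI x ≤ AnnI y},
      ∀ n, AnnI (g n).1 < AnnI (g (n+1)).1 := by
    have h0 : ∃ y : R, y ≠ 0 ∧ AnnI x ≤ AnnI y := ⟨x, hx, le_rfl⟩
    choose F hF1 hF2 using fun (y : {y : R // y ≠ 0 ∧ AnnI x ≤ AnnI y}) =>
      step y.1 y.2.1 y.2.2
    refine ⟨fun n => Nat.rec ⟨x, hx, le_rfl⟩ (fun _ y => ⟨F y, hF1 y, y.2.2.trans (hF2 y).le⟩) n,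
      fun n => ?_⟩
    exact hF2 _
  obtain ⟨g, hg⟩ := this
  obtain ⟨n, hn⟩ := hacc (fun n => AnnI (g n).1)
    (monotone_nat_of_le_succ fun n => (hg n).le)
    (fun n => ⟨Ideal.span {(g n).1}, rfl⟩)
  exact absurd (hn (n+1) (Nat.le_succ n)) (hg n).ne'

lemma maxAnn_prime {P : Ideal R} (hP : P ∈ MaxAnn R) : P.IsPrime := by
  obtain ⟨y, hy, rfl, hmax⟩ := hP
  constructor
  · intro h
    have : (1 : R) ∈ AnnI y := h ▸ Submodule.mem_top
    rw [mem_AnnI, one_mul] at this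
    exact hy this
  · intro a b hab
    by_cases hb : b ∈ AnnI y
    · exact Or.inr hb
    · left
      rw [mem_AnnI] at hb
      have hle : AnnI y ≤ AnnI (b * y) := by
        intro p hp
        rw [mem_AnnI] at hp ⊢
        rw [mul_comm b y, ← mul_assoc, hp, zero_mul]
      have := hmax (b * y) hb hle
      rw [← this, mem_AnnI, ← mul_assoc]
      exact mem_AnnI.mp hab

end Aux

section Aux2
variable {R : Type*} [CommRing R]

lemma maxAnn_mul_eq_zero {P P' : Ideal R} (hP : P ∈ MaxAnn R) (hP' : P' ∈ MaxAnn R)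
    (hne : P ≠ P') {y z : R} (hy : y ≠ 0) (hz : z ≠ 0) (hPy : P = AnnI y)
    (hPz : P' = AnnI z) : y * z = 0 := by
  by_contra hyz
  have h1 : P ≤ AnnI (y * z) := by
    intro p hp
    rw [mem_AnnI, ← mul_assoc]
    rw [hPy, mem_AnnI] at hp
    rw [hp, zero_mul]
  have h2 : P' ≤ AnnI (y * z) := by
    intro p hp
    rw [mem_AnnI, mul_comm y z, ← mul_assoc]
    rw [hPz, mem_AnnI] at hp
    rw [hp, zero_mul]
  obtain ⟨y', hy', hPy', hmax⟩ := hP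
  obtain ⟨z', hz', hPz', hmax'⟩ := hP'
  exact hne ((hmax _ hyz h1).symm.trans (hmax' _ hyz h2))

lemma maxAnn_zd {P : Ideal R} (hP : P ∈ MaxAnn R) {c : R} (hc : c ∈ P) :
    c ∉ nonZeroDivisors R := by
  obtain ⟨y, hy, rfl, -⟩ := hP
  rw [mem_AnnI] at hc
  intro hreg
  exact hy (mem_nonZeroDivisors_iff_right.mp hreg y (by rw [mul_comm]; exact hc))

lemma zd_mem_maxAnn (hacc : AccOnAnnihilators R) {x : R} (hx : x ∉ nonZeroDivisors R) :
    ∃ P ∈ MaxAnn R, x ∈ P := by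
  rw [mem_nonZeroDivisors_iff_right] at hx
  push_neg at hx
  obtain ⟨y, hyx, hy⟩ := hx
  obtain ⟨P, hP, hle⟩ := exists_maxAnn hacc hy
  exact ⟨P, hP, hle (mem_AnnI.mpr (by rw [mul_comm]; exact hyx))⟩

lemma maxAnn_finite (hred : IsReduced R) (hdim : HasFiniteGoldieDim R) :
    (MaxAnn R).Finite := by
  by_contra hinf
  have hinf' : (MaxAnn R).Infinite := hinf
  let e := hinf'.natEmbedding
  have hchoose : ∀ n : ℕ, ∃ y : R, y ≠ 0 ∧ (e n : Ideal R) = AnnI y := by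
    intro n
    obtain ⟨y, hy, h, -⟩ := (e n).2
    exact ⟨y, hy, h⟩
  choose y hy hAnn using hchoose
  have hmul : ∀ m n : ℕ, m ≠ n → y m * y n = 0 := by
    intro m n hmn
    refine maxAnn_mul_eq_zero (e m).2 (e n).2 ?_ (hy m) (hy n) (hAnn m) (hAnn n)
    exact fun h => hmn (e.injective (Subtype.ext h))
  apply hdim
  refine ⟨fun n => Ideal.span {y n}, fun n => ?_, ?_⟩
  · simp only [Ne, Ideal.span_singleton_eq_bot]
    exact hy n
  · intro n
    rw [disjoint_iff]
    rw [eq_bot_iff]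
    intro t ht
    obtain ⟨ht1, ht2⟩ := Submodule.mem_inf.mp ht
    have hsup : (⨆ j, ⨆ (_ : j ≠ n), Ideal.span {y j}) ≤ AnnI (y n) := by
      refine iSup_le fun j => iSup_le fun hj => ?_
      rw [Ideal.span_le]
      intro s hs
      rw [Set.mem_singleton_iff] at hs
      subst hs
      exact mem_AnnI.mpr (hmul j n hj)
    have htn : t * y n = 0 := mem_AnnI.mp (hsup ht2)
    obtain ⟨a, ha⟩ := Ideal.mem_span_singleton'.mp ht1
    have : t * t = 0 := by
      have h2 : t * t = a * (t * y n) := by rw [← ha]; ring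
      rw [h2, htn, mul_zero]
    have := hred.eq_zero t ⟨2, by rw [pow_two]; exact this⟩
    simpa using this

end Aux2

section Aux3
variable {R : Type*} [CommRing R]

lemma prime_le_maxAnn_eq (hred : IsReduced R) {p P : Ideal R} (hp : p.IsPrime)
    (hP : P ∈ MaxAnn R) (hle : p ≤ P) : p = P := by
  obtain ⟨y, hy, rfl, -⟩ := hP
  refine le_antisymm hle fun a ha => ?_
  have hyp : y ∉ p := by
    intro hyp
    have : y * y = 0 := mem_AnnI.mp (hle hyp)
    exact hy (hred.eq_zero y ⟨2, by rwa [pow_two]⟩)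
  rcases hp.mem_or_mem (show a * y ∈ p from (mem_AnnI.mp ha) ▸ p.zero_mem) with h | h
  · exact h
  · exact absurd h hyp

lemma maxAnn_inter_eq_bot (hred : IsReduced R) (hacc : AccOnAnnihilators R)
    {x : R} (hx : ∀ P ∈ MaxAnn R, x ∈ P) : x = 0 := by
  by_contra hx0
  obtain ⟨P, hP, hle⟩ := exists_maxAnn hacc hx0
  have hxP := hx P hP
  obtain ⟨y, hy, hPy, -⟩ := hP
  have hxy : x * y = 0 := mem_AnnI.mp (hPy ▸ hxP)
  have hyAnn : y ∈ AnnI x := mem_AnnI.mpr (by rwa [mul_comm])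
  have : y * y = 0 := mem_AnnI.mp (hPy ▸ hle hyAnn)
  exact hy (hred.eq_zero y ⟨2, by rwa [pow_two]⟩)

lemma avoidance (hred : IsReduced R) (hG : IsGoldieRing R)
    {I : Ideal R} (hI : ∀ P ∈ MaxAnn R, ¬ I ≤ P) :
    ∃ c ∈ I, c ∈ nonZeroDivisors R := by
  classical
  have hfin := maxAnn_finite hred hG.1
  have hsub : ¬ (I : Set R) ⊆ ⋃ P ∈ (hfin.toFinset : Set (Ideal R)), (P : Set R) := by
    rw [Ideal.subset_union_prime ⊤ ⊤ (fun P hP _ _ => maxAnn_prime (hfin.mem_toFinset.mp hP))]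
    push_neg
    intro P hP
    exact hI P (hfin.mem_toFinset.mp hP)
  rw [Set.not_subset] at hsub
  obtain ⟨c, hcI, hc⟩ := hsub
  refine ⟨c, hcI, ?_⟩
  by_contra hreg
  obtain ⟨P, hP, hcP⟩ := zd_mem_maxAnn hG.2 hreg
  exact hc (Set.mem_biUnion (hfin.mem_toFinset.mpr hP) hcP)

lemma vnr_prep (hred : IsReduced R) (hG : IsGoldieRing R) (r : R) :
    ∃ c ∈ nonZeroDivisors R, ∃ a : R, c * r = a * (r * r) := by
  have hI : ∀ P ∈ MaxAnn R, ¬ (AnnI r ⊔ Ideal.span {r}) ≤ P := by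
    intro P hP hle
    have hrP : r ∈ P := hle (le_sup_right (α := Ideal R) (Ideal.subset_span rfl))
    obtain ⟨y, hy, hPy, -⟩ := hP
    have hry : r * y = 0 := mem_AnnI.mp (hPy ▸ hrP)
    have hyAnn : y ∈ AnnI r := mem_AnnI.mpr (by rwa [mul_comm])
    have : y * y = 0 := mem_AnnI.mp (hPy ▸ hle (le_sup_left (α := Ideal R) hyAnn))
    exact hy (hred.eq_zero y ⟨2, by rwa [pow_two]⟩)
  obtain ⟨c, hcI, hc⟩ := avoidance hred hG hI
  obtain ⟨b, hb, t, ht, hbt⟩ := Submodule.mem_sup.mp hcI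
  obtain ⟨a, ha⟩ := Ideal.mem_span_singleton'.mp ht
  refine ⟨c, hc, a, ?_⟩
  have hbr : b * r = 0 := mem_AnnI.mp hb
  rw [← hbt, add_mul, hbr, zero_add, ← ha]
  ring

end Aux3


theorem fractionRing_artinian_vnr_of_semiprime_goldie (R : Type*) [CommRing R]
    (hsp : nilradical R = 0) (hG : IsGoldieRing R) :
    IsArtinianRing (FractionRing R) ∧
      (∀ x : FractionRing R, ∃ y : FractionRing R, x * y * x = x) ∧
      (minimalPrimes (FractionRing R)).Finite := by
  classical
  have hred : IsReduced R := by
    constructor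
    intro x hx
    have hmem : x ∈ nilradical R := mem_nilradical.mpr hx
    rw [hsp] at hmem
    simpa using hmem
  set Q := FractionRing R with hQ
  set alg := algebraMap R Q with halg
  -- T1 : extensions of maximal annihilators are prime with the right contraction
  have hdisj : ∀ P ∈ MaxAnn R, Disjoint (nonZeroDivisors R : Set R) (P : Set R) := by
    intro P hP
    rw [Set.disjoint_left]
    exact fun {c} hc hcP => maxAnn_zd hP hcP hc
  have hT1 : ∀ P ∈ MaxAnn R, (Ideal.map alg P).IsPrime ∧ Ideal.comap alg (Ideal.map alg P) = P :=
    fun P hP =>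
      ⟨IsLocalization.isPrime_of_isPrime_disjoint (nonZeroDivisors R) Q P (maxAnn_prime hP)
        (hdisj P hP),
       IsLocalization.comap_map_of_isPrime_disjoint (nonZeroDivisors R) Q (I := P) (maxAnn_prime hP)
        (hdisj P hP)⟩
  -- T2 : every prime of Q is an extension of a maximal annihilator
  have hfin := maxAnn_finite hred hG.1
  have hT2 : ∀ q : Ideal Q, q.IsPrime → ∃ P ∈ MaxAnn R, q = Ideal.map alg P := by
    intro q hq
    have hpprime : (Ideal.comap alg q).IsPrime := hq.comap alg
    have hsub : (Ideal.comap alg q : Set R) ⊆ ⋃ P ∈ (hfin.toFinset : Set (Ideal R)), (P : Set R) := by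
      intro x hx
      have hxnr : x ∉ nonZeroDivisors R := by
        intro hxr
        exact hq.ne_top (Ideal.eq_top_of_isUnit_mem q hx
          (IsLocalization.map_units Q (⟨x, hxr⟩ : nonZeroDivisors R)))
      obtain ⟨P, hP, hxP⟩ := zd_mem_maxAnn hG.2 hxnr
      exact Set.mem_biUnion (hfin.mem_toFinset.mpr hP) hxP
    rw [Ideal.subset_union_prime ⊤ ⊤ (fun P hP _ _ => maxAnn_prime (hfin.mem_toFinset.mp hP))]
      at hsub
    obtain ⟨P, hP, hle⟩ := hsub
    rw [hfin.mem_toFinset] at hP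
    have heq : Ideal.comap alg q = P := prime_le_maxAnn_eq hred hpprime hP hle
    refine ⟨P, hP, ?_⟩
    rw [← heq, IsLocalization.map_comap (nonZeroDivisors R) Q q]
  -- T3 : extensions are maximal ideals
  have hT3 : ∀ P ∈ MaxAnn R, (Ideal.map alg P).IsMaximal := by
    intro P hP
    refine ⟨⟨(hT1 P hP).1.ne_top, fun J hJ => ?_⟩⟩
    by_contra hJtop
    obtain ⟨mm, hmm, hJm⟩ := Ideal.exists_le_maximal J hJtop
    obtain ⟨P', hP', hmP'⟩ := hT2 mm hmm.isPrime
    have hPP' : P ≤ P' := by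
      have := Ideal.comap_mono (f := alg) (le_trans hJ.le hJm)
      rwa [(hT1 P hP).2, hmP', (hT1 P' hP').2] at this
    obtain ⟨y, hy, hPy, hmax⟩ := hP
    obtain ⟨z, hz, hP'z, -⟩ := hP'
    have : P' = P := by
      rw [hP'z]
      exact hmax z hz (hP'z ▸ hPP')
    rw [hmP', this] at hJm
    exact absurd (le_antisymm hJm hJ.le) hJ.ne'
  -- T4 : the intersection of the extensions is zero
  have hT4 : ∀ z : Q, (∀ P ∈ MaxAnn R, z ∈ Ideal.map alg P) → z = 0 := by
    intro z hz
    obtain ⟨⟨r, s⟩, hrs⟩ := IsLocalization.surj (nonZeroDivisors R) z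
    have hr : ∀ P ∈ MaxAnn R, r ∈ P := by
      intro P hP
      have : alg r ∈ Ideal.map alg P := by
        rw [← hrs]
        exact Ideal.mul_mem_right _ _ (hz P hP)
      rw [← (hT1 P hP).2]
      exact this
    have hr0 : r = 0 := maxAnn_inter_eq_bot hred hG.2 hr
    have : z * alg s = 0 := by rw [hrs, hr0, map_zero]
    have hs := IsLocalization.map_units Q s
    rcases hs.exists_right_inv with ⟨d, hd⟩
    calc z = z * (alg s * d) := by rw [hd, mul_one]
    _ = z * alg s * d := by ring
    _ = 0 := by rw [this, zero_mul]
  refine ⟨?_, ?_, ?_⟩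
  · -- Artinian
    haveI : Finite ↥(MaxAnn R) := hfin.to_subtype
    set N : ↥(MaxAnn R) → Ideal Q := fun P => Ideal.map alg P.1 with hN
    haveI hmax : ∀ P : ↥(MaxAnn R), (N P).IsMaximal := fun P => hT3 P.1 P.2
    haveI : ∀ P : ↥(MaxAnn R), IsArtinian Q (Q ⧸ N P) := by
      intro P
      haveI : IsSimpleModule Q (Q ⧸ N P) :=
        isSimpleModule_iff_isCoatom.mpr (Ideal.isMaximal_def.mp (hmax P))
      have hbot : Acc (fun a b : Submodule Q (Q ⧸ N P) => a < b) ⊥ :=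
        Acc.intro _ (fun y hy => absurd hy (by simp))
      constructor
      constructor
      intro S
      rcases eq_bot_or_eq_top S with h | h
      · rw [h]; exact hbot
      · rw [h]
        refine Acc.intro _ (fun y hy => ?_)
        rcases eq_bot_or_eq_top y with h' | h'
        · rw [h']; exact hbot
        · exact absurd (h' ▸ hy) (lt_irrefl _)
    let f : Q →ₗ[Q] ∀ P : ↥(MaxAnn R), Q ⧸ N P := LinearMap.pi fun P => (N P).mkQ
    have hinj : Function.Injective f := by
      rw [← LinearMap.ker_eq_bot, eq_bot_iff]
      intro z hz
      simp only [LinearMap.mem_ker] at hz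
      have : ∀ P : ↥(MaxAnn R), z ∈ N P := by
        intro P
        have h := congrFun hz P
        simp only [f, LinearMap.pi_apply, Submodule.mkQ_apply, Pi.zero_apply,
          Submodule.Quotient.mk_eq_zero] at h
        exact h
      exact hT4 z fun P hP => this ⟨P, hP⟩
    exact isArtinian_of_injective f hinj
  · -- von Neumann regular
    intro x
    obtain ⟨⟨r, s⟩, hrs⟩ := IsLocalization.surj (nonZeroDivisors R) x
    obtain ⟨c, hc, a, hca⟩ := vnr_prep hred hG r
    have hcu := IsLocalization.map_units Q (⟨c, hc⟩ : nonZeroDivisors R)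
    rcases hcu.exists_right_inv with ⟨d, hd0⟩
    have hd : alg c * d = 1 := hd0
    have hrs' : x * alg s = alg r := hrs
    refine ⟨alg a * alg s * d, ?_⟩
    have hsu := IsLocalization.map_units Q s
    have hcan : IsUnit (alg c * alg s) := hcu.mul hsu
    apply hcan.mul_left_cancel
    have h3 : alg c * alg r = alg a * (alg r * alg r) := by
      rw [← _root_.map_mul, ← _root_.map_mul, ← _root_.map_mul, hca]
    calc alg c * alg s * (x * (alg a * alg s * d) * x)
        = (alg c * d) * (alg a * ((x * alg s) * (x * alg s))) := by ring
      _ = 1 * (alg a * (alg r * alg r)) := by rw [hrs', hd]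
      _ = alg c * alg r := by rw [one_mul, ← h3]
      _ = alg c * (x * alg s) := by rw [hrs']
      _ = alg c * alg s * x := by ring
  · -- finitely many minimal primes
    refine Set.Finite.subset (hfin.image (Ideal.map alg)) ?_
    intro q hq
    obtain ⟨P, hP, hqP⟩ := hT2 q hq.1.1
    exact ⟨P, hP, hqP.symm⟩
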